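/- Let $\lambda\in\mathbb{R}$, $\mu>0$. Then there exists $C>0$ such that for all $x\in\mathbb{R}$ and $t\geq 0$: $\left|\int_{0}^{t}e^{-\frac{t-s}{\mu}}(s+1)^{-1/4}\,[(x-\lambda(s+1))^2+(s+1)]^{-3/4}\,ds\right|\leq C(t+1)^{-1/4}[(x-\lambda(t+1))^2+(t+1)]^{-3/4}$. -/

import Mathlib

open Real MeasureTheory intervalIntegral

set_option maxHeartbeats 1000000 in
lemma aux_pointwise (lam μ η x t s : ℝ) (hμ : 0 < μ) (hη0 : 0 < η) (hη1 : η ≤ 1)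
    (hη2 : η ≤ 1/(6*μ)) (hs0 : 0 ≤ s) (hst : s ≤ t) :
    Real.exp (-(t-s)/μ) * (s+1) ^ (-(1:ℝ)/4) * ((x - lam*(s+1))^2 + (s+1)) ^ (-(3:ℝ)/4)
      ≤ ((3+2*lam^2)/η^3 * ((t+1) ^ (-(1:ℝ)/4) * ((x - lam*(t+1))^2 + (t+1)) ^ (-(3:ℝ)/4))) *
        Real.exp ((s-t)/(2*μ)) := by
  have hs1 : (0:ℝ) < s + 1 := by linarith
  have ht1 : (0:ℝ) < t + 1 := by linarith
  have hNs : (0:ℝ) < (x - lam*(s+1))^2 + (s+1) := by nlinarith [sq_nonneg (x - lam*(s+1))]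
  have hNt : (0:ℝ) < (x - lam*(t+1))^2 + (t+1) := by nlinarith [sq_nonneg (x - lam*(t+1))]
  have hA : (0:ℝ) < (s+1) ^ ((1:ℝ)/4) * ((x - lam*(s+1))^2 + (s+1)) ^ ((3:ℝ)/4) :=
    mul_pos (Real.rpow_pos_of_pos hs1 _) (Real.rpow_pos_of_pos hNs _)
  have hB : (0:ℝ) < (t+1) ^ ((1:ℝ)/4) * ((x - lam*(t+1))^2 + (t+1)) ^ ((3:ℝ)/4) :=
    mul_pos (Real.rpow_pos_of_pos ht1 _) (Real.rpow_pos_of_pos hNt _)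
  have hτ : 0 ≤ t - s := by linarith
  -- key inequality on positive powers
  have key : (t+1) ^ ((1:ℝ)/4) * ((x - lam*(t+1))^2 + (t+1)) ^ ((3:ℝ)/4)
      ≤ (3+2*lam^2)/η^3 * Real.exp ((t-s)/(2*μ)) *
        ((s+1) ^ ((1:ℝ)/4) * ((x - lam*(s+1))^2 + (s+1)) ^ ((3:ℝ)/4)) := by
    have h1 : t+1 ≤ (1+(t-s))*(s+1) := by nlinarith [mul_nonneg hτ hs0]
    have h2 : (x - lam*(t+1))^2 + (t+1)
        ≤ (2+2*lam^2*(t-s)^2+(t-s)) * ((x - lam*(s+1))^2 + (s+1)) := by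
      nlinarith [sq_nonneg (x - lam*(s+1) + lam*(t-s)),
        mul_nonneg hτ (sq_nonneg (x - lam*(s+1))),
        mul_nonneg (mul_nonneg (sq_nonneg lam) (sq_nonneg (t-s))) (sq_nonneg (x - lam*(s+1))),
        mul_nonneg (mul_nonneg (sq_nonneg lam) (sq_nonneg (t-s))) hs0,
        mul_nonneg hτ hs0]
    have hQ0 : (0:ℝ) ≤ 2+2*lam^2*(t-s)^2+(t-s) := by nlinarith [sq_nonneg (lam*(t-s))]
    have hQ1 : (1:ℝ) ≤ 2+2*lam^2*(t-s)^2+(t-s) := by nlinarith [sq_nonneg (lam*(t-s))]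
    have hb1 : (t+1) ^ ((1:ℝ)/4) ≤ (1+(t-s)) ^ ((1:ℝ)/4) * (s+1) ^ ((1:ℝ)/4) := by
      rw [← Real.mul_rpow (by linarith) (by linarith)]
      exact Real.rpow_le_rpow (by linarith) h1 (by norm_num)
    have hb2 : ((x - lam*(t+1))^2 + (t+1)) ^ ((3:ℝ)/4)
        ≤ (2+2*lam^2*(t-s)^2+(t-s)) ^ ((3:ℝ)/4) * ((x - lam*(s+1))^2 + (s+1)) ^ ((3:ℝ)/4) := by
      rw [← Real.mul_rpow hQ0 hNs.le]
      exact Real.rpow_le_rpow hNt.le h2 (by norm_num)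
    have hr1 : (1+(t-s)) ^ ((1:ℝ)/4) ≤ 1+(t-s) := by
      nth_rewrite 2 [← Real.rpow_one (1+(t-s))]
      exact Real.rpow_le_rpow_of_exponent_le (by linarith) (by norm_num)
    have hr2 : (2+2*lam^2*(t-s)^2+(t-s)) ^ ((3:ℝ)/4) ≤ 2+2*lam^2*(t-s)^2+(t-s) := by
      nth_rewrite 2 [← Real.rpow_one (2+2*lam^2*(t-s)^2+(t-s))]
      exact Real.rpow_le_rpow_of_exponent_le hQ1 (by norm_num)
    have hpoly : (1+(t-s))*(2+2*lam^2*(t-s)^2+(t-s)) ≤ (3+2*lam^2)*(1+(t-s))^3 := by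
      nlinarith [mul_nonneg (sq_nonneg lam) hτ, mul_nonneg (mul_nonneg hτ hτ) hτ,
        mul_nonneg (sq_nonneg lam) (mul_nonneg hτ hτ), mul_nonneg hτ hτ, sq_nonneg lam,
        mul_nonneg (mul_nonneg (sq_nonneg lam) hτ) (mul_nonneg hτ hτ)]
    have e1 : η*(1+(t-s)) ≤ Real.exp (η*(t-s)) := by
      nlinarith [Real.add_one_le_exp (η*(t-s))]
    have e2 : (η*(1+(t-s)))^3 ≤ Real.exp (η*(t-s))^3 := by
      apply pow_le_pow_left₀ (by positivity) e1
    have e3 : Real.exp (η*(t-s))^3 = Real.exp (η*(t-s) + η*(t-s) + η*(t-s)) := by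
      rw [Real.exp_add, Real.exp_add]; ring
    have e4 : Real.exp (η*(t-s) + η*(t-s) + η*(t-s)) ≤ Real.exp ((t-s)/(2*μ)) := by
      apply Real.exp_le_exp.mpr
      have h3η : η*(t-s) ≤ (1/(6*μ))*(t-s) := mul_le_mul_of_nonneg_right hη2 hτ
      have hq : (1/(6*μ))*(t-s)*3 = (t-s)/(2*μ) := by field_simp; ring
      linarith
    have hexp : (1+(t-s))^3 ≤ Real.exp ((t-s)/(2*μ)) / η^3 := by
      rw [le_div_iff₀ (by positivity)]
      nlinarith [e2, e3 ▸ e2, e4]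
    calc (t+1) ^ ((1:ℝ)/4) * ((x - lam*(t+1))^2 + (t+1)) ^ ((3:ℝ)/4)
        ≤ ((1+(t-s)) ^ ((1:ℝ)/4) * (s+1) ^ ((1:ℝ)/4)) *
          ((2+2*lam^2*(t-s)^2+(t-s)) ^ ((3:ℝ)/4) * ((x - lam*(s+1))^2 + (s+1)) ^ ((3:ℝ)/4)) := by
          exact mul_le_mul hb1 hb2 (Real.rpow_nonneg hNt.le _) (by positivity)
      _ = ((1+(t-s)) ^ ((1:ℝ)/4) * (2+2*lam^2*(t-s)^2+(t-s)) ^ ((3:ℝ)/4)) *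
          ((s+1) ^ ((1:ℝ)/4) * ((x - lam*(s+1))^2 + (s+1)) ^ ((3:ℝ)/4)) := by ring
      _ ≤ ((1+(t-s)) * (2+2*lam^2*(t-s)^2+(t-s))) *
          ((s+1) ^ ((1:ℝ)/4) * ((x - lam*(s+1))^2 + (s+1)) ^ ((3:ℝ)/4)) := by
          apply mul_le_mul_of_nonneg_right _ hA.le
          exact mul_le_mul hr1 hr2 (Real.rpow_nonneg hQ0 _) (by linarith)
      _ ≤ ((3+2*lam^2)*(1+(t-s))^3) *
          ((s+1) ^ ((1:ℝ)/4) * ((x - lam*(s+1))^2 + (s+1)) ^ ((3:ℝ)/4)) :=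
          mul_le_mul_of_nonneg_right hpoly hA.le
      _ ≤ ((3+2*lam^2)*(Real.exp ((t-s)/(2*μ)) / η^3)) *
          ((s+1) ^ ((1:ℝ)/4) * ((x - lam*(s+1))^2 + (s+1)) ^ ((3:ℝ)/4)) := by
          apply mul_le_mul_of_nonneg_right _ hA.le
          apply mul_le_mul_of_nonneg_left hexp (by nlinarith [sq_nonneg lam])
      _ = (3+2*lam^2)/η^3 * Real.exp ((t-s)/(2*μ)) *
          ((s+1) ^ ((1:ℝ)/4) * ((x - lam*(s+1))^2 + (s+1)) ^ ((3:ℝ)/4)) := by ring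
  -- rewrite negative powers as inverses
  rw [show (-(1:ℝ)/4) = -(1/4:ℝ) by norm_num, show (-(3:ℝ)/4) = -(3/4:ℝ) by norm_num,
    Real.rpow_neg hs1.le, Real.rpow_neg hNs.le, Real.rpow_neg ht1.le, Real.rpow_neg hNt.le]
  have hE : Real.exp (-(t-s)/μ) * Real.exp ((t-s)/(2*μ)) = Real.exp ((s-t)/(2*μ)) := by
    rw [← Real.exp_add]; congr 1; field_simp; ring
  have main : Real.exp (-(t-s)/μ) / ((s+1) ^ ((1:ℝ)/4) * ((x - lam*(s+1))^2 + (s+1)) ^ ((3:ℝ)/4))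
      ≤ (3+2*lam^2)/η^3 * Real.exp ((s-t)/(2*μ)) /
        ((t+1) ^ ((1:ℝ)/4) * ((x - lam*(t+1))^2 + (t+1)) ^ ((3:ℝ)/4)) := by
    rw [div_le_div_iff₀ hA hB]
    calc Real.exp (-(t-s)/μ) * ((t+1) ^ ((1:ℝ)/4) * ((x - lam*(t+1))^2 + (t+1)) ^ ((3:ℝ)/4))
        ≤ Real.exp (-(t-s)/μ) * ((3+2*lam^2)/η^3 * Real.exp ((t-s)/(2*μ)) *
          ((s+1) ^ ((1:ℝ)/4) * ((x - lam*(s+1))^2 + (s+1)) ^ ((3:ℝ)/4))) :=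
          mul_le_mul_of_nonneg_left key (Real.exp_nonneg _)
      _ = (3+2*lam^2)/η^3 * Real.exp ((s-t)/(2*μ)) *
          ((s+1) ^ ((1:ℝ)/4) * ((x - lam*(s+1))^2 + (s+1)) ^ ((3:ℝ)/4)) := by
          rw [← hE]; ring
  calc Real.exp (-(t-s)/μ) * ((s+1) ^ ((1:ℝ)/4))⁻¹ * (((x - lam*(s+1))^2 + (s+1)) ^ ((3:ℝ)/4))⁻¹
      = Real.exp (-(t-s)/μ) / ((s+1) ^ ((1:ℝ)/4) * ((x - lam*(s+1))^2 + (s+1)) ^ ((3:ℝ)/4)) := by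
        ring
    _ ≤ (3+2*lam^2)/η^3 * Real.exp ((s-t)/(2*μ)) /
        ((t+1) ^ ((1:ℝ)/4) * ((x - lam*(t+1))^2 + (t+1)) ^ ((3:ℝ)/4)) := main
    _ = ((3+2*lam^2)/η^3 * (((t+1) ^ ((1:ℝ)/4))⁻¹ * (((x - lam*(t+1))^2 + (t+1)) ^ ((3:ℝ)/4))⁻¹)) *
        Real.exp ((s-t)/(2*μ)) := by ring

set_option maxHeartbeats 1000000 in
theorem time_convolution_psi_bound (lam μ : ℝ) (hμ : 0 < μ) :
    ∃ C > 0, ∀ (x t : ℝ), 0 ≤ t →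
      |∫ s in (0:ℝ)..t, Real.exp (-(t-s)/μ) * (s+1) ^ (-(1:ℝ)/4) *
          ((x - lam*(s+1))^2 + (s+1)) ^ (-(3:ℝ)/4)|
        ≤ C * (t+1) ^ (-(1:ℝ)/4) * ((x - lam*(t+1))^2 + (t+1)) ^ (-(3:ℝ)/4) := by
  set η : ℝ := min 1 (1/(6*μ)) with hηdef
  have hη0 : 0 < η := lt_min one_pos (by positivity)
  have hη1 : η ≤ 1 := min_le_left _ _
  have hη2 : η ≤ 1/(6*μ) := min_le_right _ _
  refine ⟨2*μ*((3+2*lam^2)/η^3), by positivity, ?_⟩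
  intro x t ht
  have ht1 : (0:ℝ) < t + 1 := by linarith
  have hNt : (0:ℝ) < (x - lam*(t+1))^2 + (t+1) := by nlinarith [sq_nonneg (x - lam*(t+1))]
  set K : ℝ := (3+2*lam^2)/η^3 with hKdef
  have hK : 0 < K := by positivity
  set W : ℝ := (t+1) ^ (-(1:ℝ)/4) * ((x - lam*(t+1))^2 + (t+1)) ^ (-(3:ℝ)/4) with hWdef
  have hW : 0 < W := mul_pos (Real.rpow_pos_of_pos ht1 _) (Real.rpow_pos_of_pos hNt _)
  have hmem : ∀ s ∈ Set.uIcc (0:ℝ) t, 0 ≤ s := by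
    rw [Set.uIcc_of_le ht]; exact fun s hs => hs.1
  have hcont : ContinuousOn (fun s : ℝ => Real.exp (-(t-s)/μ) * (s+1) ^ (-(1:ℝ)/4) *
      ((x - lam*(s+1))^2 + (s+1)) ^ (-(3:ℝ)/4)) (Set.uIcc 0 t) := by
    apply ContinuousOn.mul
    · apply ContinuousOn.mul
      · exact (Real.continuous_exp.comp (by continuity)).continuousOn
      · apply ContinuousOn.rpow_const (by fun_prop)
        intro a ha
        have := hmem a ha
        exact Or.inl (by positivity)
    · apply ContinuousOn.rpow_const (by fun_prop)
      intro a ha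
      have := hmem a ha
      have : (0:ℝ) < (x - lam*(a+1))^2 + (a+1) := by nlinarith [sq_nonneg (x - lam*(a+1))]
      exact Or.inl (by linarith)
  have hfi : IntervalIntegrable (fun s : ℝ => Real.exp (-(t-s)/μ) * (s+1) ^ (-(1:ℝ)/4) *
      ((x - lam*(s+1))^2 + (s+1)) ^ (-(3:ℝ)/4)) volume 0 t := hcont.intervalIntegrable
  have hgi : IntervalIntegrable (fun s : ℝ => (K * W) * Real.exp ((s-t)/(2*μ))) volume 0 t := by
    apply Continuous.intervalIntegrable
    exact continuous_const.mul (Real.continuous_exp.comp (by continuity))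
  -- nonnegativity of the integrand
  have hnn : ∀ s ∈ Set.Icc (0:ℝ) t, 0 ≤ Real.exp (-(t-s)/μ) * (s+1) ^ (-(1:ℝ)/4) *
      ((x - lam*(s+1))^2 + (s+1)) ^ (-(3:ℝ)/4) := by
    intro s hs
    have hs0 : (0:ℝ) ≤ s := hs.1
    have h1 : (0:ℝ) ≤ s + 1 := by linarith
    have h2 : (0:ℝ) ≤ (x - lam*(s+1))^2 + (s+1) := by nlinarith [sq_nonneg (x - lam*(s+1))]
    exact mul_nonneg (mul_nonneg (Real.exp_nonneg _) (Real.rpow_nonneg h1 _)) (Real.rpow_nonneg h2 _)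
  have habs : |∫ s in (0:ℝ)..t, Real.exp (-(t-s)/μ) * (s+1) ^ (-(1:ℝ)/4) *
      ((x - lam*(s+1))^2 + (s+1)) ^ (-(3:ℝ)/4)| =
      ∫ s in (0:ℝ)..t, Real.exp (-(t-s)/μ) * (s+1) ^ (-(1:ℝ)/4) *
      ((x - lam*(s+1))^2 + (s+1)) ^ (-(3:ℝ)/4) := by
    apply abs_of_nonneg
    apply intervalIntegral.integral_nonneg ht
    exact fun s hs => hnn s hs
  have hmono : (∫ s in (0:ℝ)..t, Real.exp (-(t-s)/μ) * (s+1) ^ (-(1:ℝ)/4) *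
      ((x - lam*(s+1))^2 + (s+1)) ^ (-(3:ℝ)/4))
      ≤ ∫ s in (0:ℝ)..t, (K * W) * Real.exp ((s-t)/(2*μ)) := by
    apply intervalIntegral.integral_mono_on ht hfi hgi
    intro s hs
    exact aux_pointwise lam μ η x t s hμ hη0 hη1 hη2 hs.1 hs.2
  -- compute the exponential integral
  have hderiv : ∀ s ∈ Set.uIcc (0:ℝ) t,
      HasDerivAt (fun u : ℝ => 2*μ * Real.exp ((u-t)/(2*μ))) (Real.exp ((s-t)/(2*μ))) s := by
    intro s _
    have h := ((((hasDerivAt_id s).sub_const t).div_const (2*μ)).exp).const_mul (2*μ)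
    refine h.congr_deriv ?_
    have h2μ : (2*μ) ≠ 0 := by positivity
    simp only [id]
    field_simp
  have hexpint : (∫ s in (0:ℝ)..t, Real.exp ((s-t)/(2*μ)))
      = 2*μ * Real.exp ((t-t)/(2*μ)) - 2*μ * Real.exp ((0-t)/(2*μ)) := by
    rw [intervalIntegral.integral_eq_sub_of_hasDerivAt hderiv]
    apply Continuous.intervalIntegrable
    exact Real.continuous_exp.comp (by continuity)
  have hgval : (∫ s in (0:ℝ)..t, (K * W) * Real.exp ((s-t)/(2*μ)))
      = (K * W) * (2*μ * Real.exp ((t-t)/(2*μ)) - 2*μ * Real.exp ((0-t)/(2*μ))) := by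
    rw [intervalIntegral.integral_const_mul, hexpint]
  have hfinal : (K * W) * (2*μ * Real.exp ((t-t)/(2*μ)) - 2*μ * Real.exp ((0-t)/(2*μ)))
      ≤ 2*μ*K * W := by
    have h1 : Real.exp ((t-t)/(2*μ)) = 1 := by simp
    have h2 : 0 < Real.exp ((0-t)/(2*μ)) := Real.exp_pos _
    have hKW : 0 < K * W := mul_pos hK hW
    rw [h1]
    nlinarith [mul_nonneg (mul_nonneg hKW.le (by linarith : (0:ℝ) ≤ 2*μ)) h2.le]
  rw [habs]
  have last : 2*μ*K * W = 2*μ*K * (t+1) ^ (-(1:ℝ)/4) * ((x - lam*(t+1))^2 + (t+1)) ^ (-(3:ℝ)/4) := by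
    rw [hWdef]; ring
  linarith [hmono, hgval.le, hgval.ge, hfinal]
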